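/- (Controllable-state case of Proposition 2.) Let K ⊆ L be a nonempty finite language controllable with respect to the plant language L, and suppose no uncontrollable event u ∈ Σ_uc has the one-letter string [u] ∈ L. Then a language K' is a minimal nonempty controllable sublanguage of K with respect to L if and only if either (i) ε ∈ K and K' = {ε}, or (ii) there exist an event a with a⁻¹K ≠ ∅ and a minimal nonempty controllable sublanguage L_a of a⁻¹K with respect to a⁻¹L such that K' = {a}·L_a. -/

import Mathlib

/-- Prefix closure of a language: all strings that can be extended to a member. -/
def pref {α : Type*} (K : Set (List α)) : Set (List α) := {s | ∃ t, s ++ t ∈ K}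

/-- A language `K` is controllable w.r.t. the plant language `L` (with uncontrollable
events `Suc`) if `pref(K)·Suc ∩ L ⊆ pref(K)`. -/
def Controllable {α : Type*} (Suc : Set α) (L K : Set (List α)) : Prop :=
  ∀ s ∈ pref K, ∀ u ∈ Suc, s ++ [u] ∈ L → s ++ [u] ∈ pref K

/-- A language is prefix-closed. -/
def PrefixClosed {α : Type*} (L : Set (List α)) : Prop :=
  ∀ s ∈ L, ∀ t : List α, t <+: s → t ∈ L
/-- `K1` is a minimal nonempty controllable sublanguage of `K` with respect to the
plant `L`. -/
def IsMinCtrlSub {α : Type*} (Suc : Set α) (L K K1 : Set (List α)) : Prop :=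
  K1 ⊆ K ∧ K1.Nonempty ∧ Controllable Suc L K1 ∧
  ∀ K2 : Set (List α), K2 ⊆ K → K2.Nonempty → Controllable Suc L K2 → K2 ⊆ K1 → K2 = K1

/-- The left quotient (derivative) `a⁻¹K = {s | a·s ∈ K}`. -/
def lquot {α : Type*} (a : α) (K : Set (List α)) : Set (List α) := {s | a :: s ∈ K}

section helpers
variable {α : Type*} {Suc : Set α} {L : Set (List α)}

lemma cons_injective' (a : α) : Function.Injective (fun s : List α => a :: s) :=
  fun x y h => by injection h

lemma ctrl_nil (hnouc : ¬ ∃ u ∈ Suc, [u] ∈ L) :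
    Controllable Suc L ({[]} : Set (List α)) := by
  rintro s ⟨t, ht⟩ u hu hL
  have hst : s ++ t = [] := ht
  have hs : s = [] := by
    rcases List.append_eq_nil_iff.mp hst with ⟨h1, _⟩
    exact h1
  subst hs
  exact absurd ⟨u, hu, hL⟩ hnouc

lemma ctrl_quot {a : α} {K : Set (List α)} (h : Controllable Suc L K) :
    Controllable Suc (lquot a L) (lquot a K) := by
  intro s hs u hu hL'
  obtain ⟨w, hw⟩ := hs
  have h1 : a :: s ∈ pref K := ⟨w, hw⟩
  obtain ⟨w', hw'⟩ := h (a :: s) h1 u hu hL'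
  exact ⟨w', hw'⟩

lemma ctrl_image {a : α} {S : Set (List α)}
    (hnouc : ¬ ∃ u ∈ Suc, [u] ∈ L)
    (h : Controllable Suc (lquot a L) S) :
    Controllable Suc L ((fun s => a :: s) '' S) := by
  intro s hs u hu hsL
  obtain ⟨w, v, hv, hev⟩ := hs
  cases s with
  | nil => exact absurd ⟨u, hu, hsL⟩ hnouc
  | cons b t =>
    simp only [List.cons_append] at hev
    injection hev with h1 h2
    subst h1
    have ht : t ∈ pref S := ⟨w, h2 ▸ hv⟩
    obtain ⟨w', hw'⟩ := h t ht u hu hsL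
    exact ⟨w', t ++ [u] ++ w', hw', rfl⟩

lemma ctrl_of_image {a : α} {S : Set (List α)}
    (h : Controllable Suc L ((fun s => a :: s) '' S)) :
    Controllable Suc (lquot a L) S := by
  intro t ht u hu htL
  obtain ⟨w, hw⟩ := ht
  have h1 : a :: t ∈ pref ((fun s => a :: s) '' S) := ⟨w, t ++ w, hw, rfl⟩
  obtain ⟨w', v, hv, hev⟩ := h (a :: t) h1 u hu htL
  simp only [List.cons_append] at hev
  injection hev with _ h2
  exact ⟨w', h2 ▸ hv⟩

end helpers

/-- controllable-state case of Proposition 2: if no uncontrollable event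
`u` has `[u] ∈ L`, then the minimal nonempty controllable sublanguages of `K` are
exactly `{ε}` (when `ε ∈ K`) and the languages `{a}·L_a` where `a⁻¹K ≠ ∅` and `L_a`
is a minimal nonempty controllable sublanguage of `a⁻¹K` with respect to `a⁻¹L`. -/
theorem minimal_sublanguage_controllable_state {α : Type*} [Fintype α] (Sc Suc : Set α)
    (hpart : Sc ∪ Suc = Set.univ) (hdisj : Disjoint Sc Suc)
    (L : Set (List α)) (hL : PrefixClosed L)
    (K : Set (List α)) (hKL : K ⊆ L) (hKne : K.Nonempty) (hKfin : K.Finite)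
    (hKc : Controllable Suc L K)
    (hnouc : ¬ ∃ u ∈ Suc, [u] ∈ L) :
    ∀ K' : Set (List α),
      IsMinCtrlSub Suc L K K' ↔
        (([] ∈ K ∧ K' = {[]}) ∨
          ∃ a : α, (lquot a K).Nonempty ∧
            ∃ La : Set (List α), IsMinCtrlSub Suc (lquot a L) (lquot a K) La ∧
              K' = (fun s => a :: s) '' La) := by
  intro K'
  constructor
  · rintro ⟨hsub, hne, hctrl, hmin⟩
    by_cases hnil : [] ∈ K'
    · left
      refine ⟨hsub hnil, ?_⟩
      have h := hmin {[]} (Set.singleton_subset_iff.mpr (hsub hnil)) ⟨[], rfl⟩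
        (ctrl_nil hnouc) (Set.singleton_subset_iff.mpr hnil)
      exact h.symm
    · right
      obtain ⟨s, hs⟩ := hne
      cases s with
      | nil => exact absurd hs hnil
      | cons a t =>
        have hLane : (lquot a K').Nonempty := ⟨t, hs⟩
        have hctrlLa : Controllable Suc (lquot a L) (lquot a K') := ctrl_quot hctrl
        have himg : (fun s => a :: s) '' (lquot a K') ⊆ K' := by
          rintro _ ⟨x, hx, rfl⟩; exact hx
        have heq : (fun s => a :: s) '' (lquot a K') = K' :=
          hmin _ (himg.trans hsub) ⟨a :: t, t, hs, rfl⟩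
            (ctrl_image hnouc hctrlLa) himg
        refine ⟨a, ⟨t, hsub hs⟩, lquot a K',
          ⟨fun x hx => hsub hx, hLane, hctrlLa, ?_⟩, heq.symm⟩
        intro M hMsub hMne hMctrl hMLa
        have h1 : (fun s => a :: s) '' M = K' := by
          refine hmin _ ?_ (hMne.image _) (ctrl_image hnouc hMctrl) ?_
          · rintro _ ⟨x, hx, rfl⟩; exact hMsub hx
          · rw [← heq]; exact Set.image_mono hMLa
        exact Set.image_injective.mpr (cons_injective' a) (h1.trans heq.symm)
  · rintro (⟨hK, rfl⟩ | ⟨a, hane, La, ⟨hLasub, hLane, hLactrl, hLamin⟩, rfl⟩)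
    · refine ⟨Set.singleton_subset_iff.mpr hK, ⟨[], rfl⟩, ctrl_nil hnouc, ?_⟩
      intro K2 _ hK2ne _ hK2sub
      exact (Set.subset_singleton_iff_eq.mp hK2sub).resolve_left hK2ne.ne_empty
    · refine ⟨?_, hLane.image _, ctrl_image hnouc hLactrl, ?_⟩
      · rintro _ ⟨x, hx, rfl⟩; exact hLasub hx
      · intro K2 hK2K hK2ne hK2ctrl hK2sub
        have hK2eq : (fun s => a :: s) '' (lquot a K2) = K2 := by
          apply Set.Subset.antisymm
          · rintro _ ⟨x, hx, rfl⟩; exact hx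
          · intro s hsK2
            obtain ⟨x, hx, rfl⟩ := hK2sub hsK2
            exact ⟨x, hsK2, rfl⟩
        have hMsub : lquot a K2 ⊆ La := by
          intro x hx
          obtain ⟨y, hy, hey⟩ := hK2sub hx
          injection hey with _ h2
          exact h2 ▸ hy
        have hMne : (lquot a K2).Nonempty := by
          obtain ⟨s, hsK2⟩ := hK2ne
          obtain ⟨x, hx, rfl⟩ := hK2sub hsK2
          exact ⟨x, hsK2⟩
        have hMctrl : Controllable Suc (lquot a L) (lquot a K2) :=
          ctrl_of_image (by rw [hK2eq]; exact hK2ctrl)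
        have hMeq := hLamin (lquot a K2) (hMsub.trans hLasub) hMne hMctrl hMsub
        rw [← hK2eq, hMeq]
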